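/- Let H_{x1}, H_{z1} be matrices over GF(2) of sizes m1×nA and m2×nA with H_{x1}·H_{z1}ᵀ = 0, and H_{x2}, H_{z2} be matrices over GF(2) of sizes m3×nB and m4×nB with H_{x2}·H_{z2}ᵀ = 0. Define the block matrices H_x and H_z as in the 4D XYZ product construction (Eqs. Hx, Hz of the paper). Then H_x·H_zᵀ + H_z·H_xᵀ = 0 over GF(2), i.e., the symplectic commutation condition holds. -/

import Mathlib

open Matrix Kronecker

abbrev F2 := ZMod 2

section

variable {A1 B1 A2 B2 Q1 Q2 : Type*}
  [Fintype A1] [Fintype B1] [Fintype A2] [Fintype B2] [Fintype Q1] [Fintype Q2]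
  [DecidableEq A1] [DecidableEq B1] [DecidableEq A2] [DecidableEq B2]
  [DecidableEq Q1] [DecidableEq Q2]

/-- The X-part (entries carrying Pauli `X` or `Y`) of the stabilizer matrix of the
4D XYZ product of two CSS codes with parity-check matrices
`Hx1 : A1 × Q1`, `Hz1 : B1 × Q1`, `Hx2 : A2 × Q2`, `Hz2 : B2 × Q2`
(`Q1`, `Q2` index the qubits of the two input codes; `A1,B1,A2,B2` their checks).
Rows are the four stabilizer blocks `S, T, U, V`; columns are the five
qubit blocks `A, B, C, D, E` of the 4D XYZ product (Eq. (13) of the paper,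
with block shapes as dictated by the tensor-product structure). -/
def XYZ4D_Hx (Hx1 : Matrix A1 Q1 F2) (Hz1 : Matrix B1 Q1 F2)
    (Hx2 : Matrix A2 Q2 F2) (Hz2 : Matrix B2 Q2 F2) :
    Matrix ((A1 × Q2) ⊕ (Q1 × B2) ⊕ (Q1 × A2) ⊕ (B1 × Q2))
           ((A1 × B2) ⊕ (A1 × A2) ⊕ (Q1 × Q2) ⊕ (B1 × B2) ⊕ (B1 × A2)) F2 :=
  fun r c => match r, c with
  | .inl s, .inl a => ((1 : Matrix A1 A1 F2) ⊗ₖ Hz2ᵀ) s a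
  | .inl s, .inr (.inl b) => ((1 : Matrix A1 A1 F2) ⊗ₖ Hx2ᵀ) s b
  | .inr (.inl t), .inl a => (Hx1ᵀ ⊗ₖ (1 : Matrix B2 B2 F2)) t a
  | .inr (.inl t), .inr (.inr (.inl q)) => ((1 : Matrix Q1 Q1 F2) ⊗ₖ Hz2) t q
  | .inr (.inr (.inl u)), .inr (.inr (.inl q)) => ((1 : Matrix Q1 Q1 F2) ⊗ₖ Hx2) u q
  | .inr (.inr (.inl u)), .inr (.inr (.inr (.inr e))) => (Hz1ᵀ ⊗ₖ (1 : Matrix A2 A2 F2)) u e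
  | .inr (.inr (.inr v)), .inr (.inr (.inr (.inl d))) => ((1 : Matrix B1 B1 F2) ⊗ₖ Hz2ᵀ) v d
  | .inr (.inr (.inr v)), .inr (.inr (.inr (.inr e))) => ((1 : Matrix B1 B1 F2) ⊗ₖ Hx2ᵀ) v e
  | _, _ => 0

/-- The Z-part (entries carrying Pauli `Z` or `Y`) of the stabilizer matrix of the
4D XYZ product (Eq. (14) of the paper). -/
def XYZ4D_Hz (Hx1 : Matrix A1 Q1 F2) (Hz1 : Matrix B1 Q1 F2)
    (Hx2 : Matrix A2 Q2 F2) (Hz2 : Matrix B2 Q2 F2) :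
    Matrix ((A1 × Q2) ⊕ (Q1 × B2) ⊕ (Q1 × A2) ⊕ (B1 × Q2))
           ((A1 × B2) ⊕ (A1 × A2) ⊕ (Q1 × Q2) ⊕ (B1 × B2) ⊕ (B1 × A2)) F2 :=
  fun r c => match r, c with
  | .inl s, .inr (.inl b) => ((1 : Matrix A1 A1 F2) ⊗ₖ Hx2ᵀ) s b
  | .inl s, .inr (.inr (.inl q)) => (Hx1 ⊗ₖ (1 : Matrix Q2 Q2 F2)) s q
  | .inr (.inl t), .inl a => (Hx1ᵀ ⊗ₖ (1 : Matrix B2 B2 F2)) t a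
  | .inr (.inl t), .inr (.inr (.inr (.inl d))) => (Hz1ᵀ ⊗ₖ (1 : Matrix B2 B2 F2)) t d
  | .inr (.inr (.inl u)), .inr (.inl b) => (Hx1ᵀ ⊗ₖ (1 : Matrix A2 A2 F2)) u b
  | .inr (.inr (.inl u)), .inr (.inr (.inr (.inr e))) => (Hz1ᵀ ⊗ₖ (1 : Matrix A2 A2 F2)) u e
  | .inr (.inr (.inr v)), .inr (.inr (.inl q)) => (Hz1 ⊗ₖ (1 : Matrix Q2 Q2 F2)) v q
  | .inr (.inr (.inr v)), .inr (.inr (.inr (.inl d))) => ((1 : Matrix B1 B1 F2) ⊗ₖ Hz2ᵀ) v d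
  | _, _ => 0

/-- The symplectic commutation condition for the 4D XYZ product:
if the two input pairs satisfy the CSS conditions `Hx1 · Hz1ᵀ = 0` and
`Hx2 · Hz2ᵀ = 0`, then `H_x·H_zᵀ + H_z·H_xᵀ = 0` over `F_2`, i.e. the
stabilizer group of the 4D XYZ product code is Abelian. -/
theorem XYZ4D_symplectic_commutation
    (Hx1 : Matrix A1 Q1 F2) (Hz1 : Matrix B1 Q1 F2)
    (Hx2 : Matrix A2 Q2 F2) (Hz2 : Matrix B2 Q2 F2)
    (hcss1 : Hx1 * Hz1ᵀ = 0) (hcss2 : Hx2 * Hz2ᵀ = 0) :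
    XYZ4D_Hx Hx1 Hz1 Hx2 Hz2 * (XYZ4D_Hz Hx1 Hz1 Hx2 Hz2)ᵀ +
    XYZ4D_Hz Hx1 Hz1 Hx2 Hz2 * (XYZ4D_Hx Hx1 Hz1 Hx2 Hz2)ᵀ = 0 := by
  ext i j
  simp only [Matrix.add_apply, Matrix.zero_apply, mul_apply, transpose_apply, Fintype.sum_sum_type]
  rcases i with ⟨a1,q2⟩ | ⟨q1,b2⟩ | ⟨q1,a2⟩ | ⟨b1,q2⟩ <;>
  rcases j with ⟨a1',q2'⟩ | ⟨q1',b2'⟩ | ⟨q1',a2'⟩ | ⟨b1',q2'⟩ <;>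
  simp [XYZ4D_Hx, XYZ4D_Hz, one_apply, Fintype.sum_prod_type,
    Finset.mul_sum, Finset.sum_mul, mul_comm, mul_assoc, mul_left_comm,
    CharTwo.add_self_eq_zero]

end
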